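/- Let N be an odd positive integer and let λ_0, …, λ_N be pairwise distinct nonnegative real numbers. Then the fundamental function satisfies Φ_N^{(j)}(x) ≥ 0 for every real x > 0 and every integer j ≥ N. -/

import Mathlib

open Polynomial Finset

/-- The basic derivative computation for `Q(t)·e^{xt} − P(t)`. -/
lemma FF_hasDerivAt (x : ℝ) (Q P : ℝ[X]) (t : ℝ) :
    HasDerivAt (fun t : ℝ => Q.eval t * Real.exp (x * t) - P.eval t)
      ((derivative Q + C x * Q).eval t * Real.exp (x * t) - (derivative P).eval t) t := by
  have h1 : HasDerivAt (fun t : ℝ => x * t) x t := by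
    simpa using (hasDerivAt_id t).const_mul x
  have h3 := (Q.hasDerivAt t).mul h1.exp
  have h4 := h3.sub (P.hasDerivAt t)
  refine h4.congr_deriv ?_
  simp only [eval_add, eval_mul, eval_C]
  ring

lemma FF_iter_deriv (x : ℝ) (Q P : ℝ[X]) (n : ℕ) :
    deriv^[n] (fun t : ℝ => Q.eval t * Real.exp (x * t) - P.eval t)
      = fun t => ((fun R : ℝ[X] => derivative R + C x * R)^[n] Q).eval t * Real.exp (x * t)
          - (derivative^[n] P).eval t := by
  induction n generalizing Q P with
  | zero => simp
  | succ n ih =>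
    rw [Function.iterate_succ_apply]
    have hd : deriv (fun t : ℝ => Q.eval t * Real.exp (x * t) - P.eval t)
        = fun t => (derivative Q + C x * Q).eval t * Real.exp (x * t)
            - (derivative P).eval t :=
      funext fun t => (FF_hasDerivAt x Q P t).deriv
    rw [hd, ih, ← Function.iterate_succ_apply, ← Function.iterate_succ_apply]

lemma FF_coeff_nonneg (x : ℝ) (hx : 0 ≤ x) (Q : ℝ[X]) (hQ : ∀ m, 0 ≤ Q.coeff m) (n : ℕ) :
    ∀ m, 0 ≤ ((fun R : ℝ[X] => derivative R + C x * R)^[n] Q).coeff m := by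
  induction n generalizing Q with
  | zero => simpa using hQ
  | succ n ih =>
    rw [Function.iterate_succ_apply]
    refine ih _ fun m => ?_
    rw [coeff_add, coeff_C_mul, coeff_derivative]
    have h1 : (0:ℝ) ≤ Q.coeff (m+1) * ((m:ℝ) + 1) := mul_nonneg (hQ (m+1)) (by positivity)
    have h2 : (0:ℝ) ≤ x * Q.coeff m := mul_nonneg hx (hQ m)
    linarith

lemma eval_nonneg_of_coeff_nonneg (Q : ℝ[X]) (hQ : ∀ m, 0 ≤ Q.coeff m) {t : ℝ} (ht : 0 ≤ t) :
    0 ≤ Q.eval t := by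
  rw [Polynomial.eval_eq_sum_range]
  exact Finset.sum_nonneg fun i _ => mul_nonneg (hQ i) (pow_nonneg ht i)

/-- Iterated Rolle theorem. -/
lemma iterated_rolle :
    ∀ (n : ℕ) (h : ℝ → ℝ), (∀ k : ℕ, Differentiable ℝ (deriv^[k] h)) →
      ∀ (z : Fin (n+1) → ℝ), StrictMono z → (∀ i, h (z i) = 0) →
      ∃ ξ, z 0 ≤ ξ ∧ ξ ≤ z (Fin.last n) ∧ deriv^[n] h ξ = 0 := by
  intro n
  induction n with
  | zero =>
    intro h _ z _ hz0
    exact ⟨z 0, le_refl _, le_refl _, by simpa using hz0 0⟩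
  | succ n ih =>
    intro h hdiff z hz hz0
    have hcont : Continuous h := by simpa using (hdiff 0).continuous
    have hroll : ∀ i : Fin (n+1), ∃ c ∈ Set.Ioo (z i.castSucc) (z i.succ), deriv h c = 0 := by
      intro i
      exact exists_deriv_eq_zero (hz (Fin.castSucc_lt_succ (i := i))) hcont.continuousOn
        (by rw [hz0, hz0])
    choose w hmem hval using hroll
    have hwmono : StrictMono w := by
      intro i j hij
      have h1 : w i < z i.succ := (hmem i).2
      have h2 : z j.castSucc < w j := (hmem j).1
      have h3 : z i.succ ≤ z j.castSucc := by
        refine hz.monotone ?_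
        rw [Fin.le_def]
        simp only [Fin.val_succ, Fin.coe_castSucc]
        exact Fin.lt_def.mp hij
      linarith
    have hdiff' : ∀ k : ℕ, Differentiable ℝ (deriv^[k] (deriv h)) := by
      intro k
      simpa [Function.iterate_succ_apply] using hdiff (k+1)
    obtain ⟨ξ, hξ1, hξ2, hξ3⟩ := ih (deriv h) hdiff' w hwmono fun i => hval i
    refine ⟨ξ, ?_, ?_, ?_⟩
    · have : z (0 : Fin (n+1)).castSucc < w 0 := (hmem 0).1
      simp only [Fin.castSucc_zero] at this
      linarith
    · have : w (Fin.last n) < z (Fin.last n).succ := (hmem (Fin.last n)).2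
      rw [Fin.succ_last] at this
      linarith
    · rw [Function.iterate_succ_apply]
      exact hξ3

lemma iter_deriv_sum_exp {m : ℕ} (c a : Fin m → ℝ) (n : ℕ) :
    deriv^[n] (fun y : ℝ => ∑ i, c i * Real.exp (a i * y))
      = fun y => ∑ i, c i * a i ^ n * Real.exp (a i * y) := by
  induction n with
  | zero => funext y; simp
  | succ n ih =>
    rw [Function.iterate_succ_apply', ih]
    funext y
    have hterm : ∀ i : Fin m, HasDerivAt (fun y : ℝ => c i * a i ^ n * Real.exp (a i * y))
        (c i * a i ^ (n+1) * Real.exp (a i * y)) y := by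
      intro i
      have h1 : HasDerivAt (fun y : ℝ => a i * y) (a i) y := by
        simpa using (hasDerivAt_id y).const_mul (a i)
      have h3 := h1.exp.const_mul (c i * a i ^ n)
      refine h3.congr_deriv ?_
      ring
    exact (HasDerivAt.fun_sum (fun i _ => hterm i)).deriv

theorem fundamental_function_derivatives_nonneg
    (N : ℕ) (hN : 0 < N) (hNodd : Odd N)
    (l : Fin (N + 1) → ℝ) (hl : Function.Injective l) (hlnonneg : ∀ j, 0 ≤ l j)
    (Φ : ℝ → ℝ)
    (hΦmem : Φ ∈ Submodule.span ℝ
        (Set.range (fun j : Fin (N + 1) => fun x : ℝ => Real.exp (l j * x))))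
    (hΦ0 : ∀ j < N, iteratedDeriv j Φ 0 = 0)
    (hΦN : iteratedDeriv N Φ 0 = 1) :
    ∀ x : ℝ, 0 < x → ∀ j : ℕ, N ≤ j → 0 ≤ iteratedDeriv j Φ x := by
  obtain ⟨c, hc⟩ := (Submodule.mem_span_range_iff_exists_fun ℝ).mp hΦmem
  have hΦfun : Φ = fun y : ℝ => ∑ i, c i * Real.exp (l i * y) := by
    rw [← hc]; funext y; simp [Finset.sum_apply]
  have hiter : ∀ n : ℕ, iteratedDeriv n Φ = fun y => ∑ i, c i * l i ^ n * Real.exp (l i * y) := by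
    intro n
    rw [hΦfun, iteratedDeriv_eq_iterate, iter_deriv_sum_exp]
  have hmom : ∀ k : ℕ, iteratedDeriv k Φ 0 = ∑ i, c i * l i ^ k := by
    intro k
    rw [hiter k]
    simp
  have hmomlt : ∀ k < N, ∑ i, c i * l i ^ k = 0 := fun k hk => by
    rw [← hmom k]; exact hΦ0 k hk
  have hmomN : ∑ i, c i * l i ^ N = 1 := by rw [← hmom N]; exact hΦN
  intro x hx j _hj
  -- the interpolation polynomial of t ↦ t^j e^{xt} at the nodes l i
  set r : Fin (N+1) → ℝ := fun i => (l i) ^ j * Real.exp (x * l i) with hr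
  set P : ℝ[X] := Lagrange.interpolate Finset.univ l r with hP
  have hinj : Set.InjOn l ↑(Finset.univ : Finset (Fin (N+1))) := fun a _ b _ hab => hl hab
  have hPeval : ∀ i : Fin (N+1), P.eval (l i) = r i := fun i =>
    Lagrange.eval_interpolate_at_node r hinj (Finset.mem_univ i)
  have hdeg : P.natDegree < N + 1 := by
    by_cases h0 : P = 0
    · rw [h0]; simpa using Nat.succ_pos N
    · rw [Polynomial.natDegree_lt_iff_degree_lt h0]
      have := Lagrange.degree_interpolate_lt r hinj
      simpa [hP] using this
  -- key identity: ∑ c i * r i = P.coeff N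
  have hkey : ∑ i, c i * l i ^ j * Real.exp (l i * x) = P.coeff N := by
    have e1 : ∑ i, c i * l i ^ j * Real.exp (l i * x) = ∑ i, c i * P.eval (l i) := by
      refine Finset.sum_congr rfl fun i _ => ?_
      rw [hPeval i, hr]
      simp only []
      rw [mul_comm x (l i)]
      ring
    rw [e1]
    have e2 : ∀ i : Fin (N+1), c i * P.eval (l i)
        = ∑ k ∈ Finset.range (N+1), P.coeff k * (c i * l i ^ k) := by
      intro i
      rw [Polynomial.eval_eq_sum_range' hdeg, Finset.mul_sum]
      exact Finset.sum_congr rfl fun k _ => by ring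
    rw [Finset.sum_congr rfl fun i _ => e2 i, Finset.sum_comm]
    have e3 : ∀ k ∈ Finset.range (N+1),
        (∑ i, P.coeff k * (c i * l i ^ k)) = P.coeff k * (∑ i, c i * l i ^ k) := by
      intro k _
      rw [Finset.mul_sum]
    rw [Finset.sum_congr rfl e3]
    rw [Finset.sum_eq_single_of_mem N (Finset.self_mem_range_succ N)]
    · rw [hmomN, mul_one]
    · intro k hk hkN
      rw [hmomlt k (lt_of_le_of_ne (Nat.lt_succ_iff.mp (Finset.mem_range.mp hk)) hkN), mul_zero]
  -- now show 0 ≤ P.coeff N  via iterated Rolle applied to t^j e^{xt} − P(t)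
  have hcoeffN : 0 ≤ P.coeff N := by
    set h : ℝ → ℝ := fun t => (X ^ j : ℝ[X]).eval t * Real.exp (x * t) - P.eval t with hh
    have hdiffall : ∀ k : ℕ, Differentiable ℝ (deriv^[k] h) := by
      intro k
      rw [hh, FF_iter_deriv]
      exact fun t => ((FF_hasDerivAt x _ _ t).differentiableAt)
    set s' : Finset ℝ := Finset.image l Finset.univ with hs'
    have hcard : s'.card = N + 1 := by
      rw [hs', Finset.card_image_of_injective _ hl, Finset.card_univ, Fintype.card_fin]
    set z : Fin (N+1) → ℝ := fun i => s'.orderEmbOfFin hcard i with hz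
    have hzmono : StrictMono z := (s'.orderEmbOfFin hcard).strictMono
    have hzmem : ∀ i, ∃ i0 : Fin (N+1), l i0 = z i := by
      intro i
      have : z i ∈ s' := Finset.orderEmbOfFin_mem s' hcard i
      rw [hs'] at this
      obtain ⟨i0, _, hi0⟩ := Finset.mem_image.mp this
      exact ⟨i0, hi0⟩
    have hzero : ∀ i, h (z i) = 0 := by
      intro i
      obtain ⟨i0, hi0⟩ := hzmem i
      rw [hh, ← hi0]
      simp only [eval_pow, eval_X]
      rw [hPeval i0, hr]
      ring
    obtain ⟨ξ, hξ1, hξ2, hξ3⟩ := iterated_rolle N h hdiffall z hzmono hzero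
    have hξ0 : 0 ≤ ξ := by
      obtain ⟨i0, hi0⟩ := hzmem 0
      calc (0:ℝ) ≤ l i0 := hlnonneg i0
        _ = z 0 := hi0
        _ ≤ ξ := hξ1
    rw [hh] at hξ3
    simp only [FF_iter_deriv] at hξ3
    -- derivative^[N] P is the constant N! * P.coeff N
    have hPN : (derivative^[N] P).eval ξ = (N.factorial : ℝ) * P.coeff N := by
      have hnd : (derivative^[N] P).natDegree ≤ 0 := by
        have := Polynomial.natDegree_iterate_derivative P N
        omega
      have hC := Polynomial.eq_C_of_natDegree_le_zero hnd
      rw [hC, eval_C, Polynomial.coeff_iterate_derivative]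
      simp [Nat.descFactorial_self, nsmul_eq_mul]
    rw [hPN] at hξ3
    have hQnn : ∀ m, 0 ≤ ((fun R : ℝ[X] => derivative R + C x * R)^[N] (X ^ j : ℝ[X])).coeff m := by
      refine FF_coeff_nonneg x hx.le _ (fun m => ?_) N
      rw [Polynomial.coeff_X_pow]
      split <;> norm_num
    have hQev : 0 ≤ ((fun R : ℝ[X] => derivative R + C x * R)^[N] (X ^ j : ℝ[X])).eval ξ
        * Real.exp (x * ξ) :=
      mul_nonneg (eval_nonneg_of_coeff_nonneg _ hQnn hξ0) (Real.exp_pos _).le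
    have hfac : (0:ℝ) < (N.factorial : ℝ) := by positivity
    nlinarith [hQev, hξ3]
  have hfin : iteratedDeriv j Φ x = P.coeff N := by
    rw [hiter j]; exact hkey
  rw [hfin]; exact hcoeffN
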